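/- Let V be a real vector space of dimension n and φ ∈ End(V) nonderogatory whose only eigenvalues are a complex conjugate pair z = r + is, z̄ with s ≠ 0 (so n is even and χ_φ(X) = ((X−r)² + s²)^{n/2}). Then there exists a basis of V in which the matrix of φ equals r·Id + s·M_s + M_n, where M_s = −Σ_{j=0}^{n/2−1}(E_{2j+1,2j+2} − E_{2j+2,2j+1}) and M_n = Σ_{j=1}^{n−2} E_{j,j+2}. -/

import Mathlib

open Polynomial

/-- Real Jordan form: a nonderogatory `φ ∈ End(V)`, `dim V = n = 2m`, whose only
eigenvalues are a complex conjugate pair `r ± is` with `s ≠ 0` (so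
`χ_φ(X) = ((X-r)² + s²)^m`), admits a basis in which its matrix is
`r·Id + s·M_s + M_n`, with `M_s = -Σ_{j=0}^{m-1}(E_{2j+1,2j+2} - E_{2j+2,2j+1})` and
`M_n = Σ_{j=1}^{n-2} E_{j,j+2}` (1-indexed). -/
noncomputable def pp16 (r s : ℝ) : ℕ → ℝ[X] × ℝ[X]
  | 0 => (1, 0)
  | k+1 => ((X - C r) * (pp16 r s k).1 + C s * (pp16 r s k).2,
            (X - C r) * (pp16 r s k).2 - C s * (pp16 r s k).1)

local notation "ρ" => Polynomial.map (algebraMap ℝ ℂ)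

lemma hI16 : (C Complex.I : ℂ[X]) * C Complex.I = -1 := by
  rw [← C_mul, Complex.I_mul_I, ← C_1, ← C_neg]

lemma ppC16 (r s : ℝ) (k : ℕ) :
    ρ (pp16 r s k).1 + C Complex.I * ρ (pp16 r s k).2
      = (X - C ((r : ℂ) + (s : ℂ) * Complex.I)) ^ k := by
  induction k with
  | zero => simp [pp16]
  | succ k ih =>
    simp only [pp16, Polynomial.map_add, Polynomial.map_sub, Polynomial.map_mul,
      Polynomial.map_X, Polynomial.map_C, pow_succ]
    rw [← ih]
    have : (C ((r:ℂ) + (s:ℂ) * Complex.I) : ℂ[X]) = C (r:ℂ) + C (s:ℂ) * C Complex.I := by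
      rw [map_add, map_mul]
    rw [this]
    have halg : ∀ x : ℝ, (C (algebraMap ℝ ℂ x) : ℂ[X]) = C (x:ℂ) := fun x => rfl
    rw [halg, halg]
    linear_combination (C (s:ℂ) * ρ (pp16 r s k).2) * hI16

noncomputable def AA16 (r s : ℝ) (m j : ℕ) : ℝ[X] :=
  (pp16 r s m).1 * (pp16 r (-s) (m-1-j)).1 - (pp16 r s m).2 * (pp16 r (-s) (m-1-j)).2

noncomputable def BB16 (r s : ℝ) (m j : ℕ) : ℝ[X] :=
  (pp16 r s m).1 * (pp16 r (-s) (m-1-j)).2 + (pp16 r s m).2 * (pp16 r (-s) (m-1-j)).1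

lemma hG16 (r s : ℝ) (m j : ℕ) :
    ρ (AA16 r s m j) + C Complex.I * ρ (BB16 r s m j)
      = (X - C ((r : ℂ) + (s : ℂ) * Complex.I)) ^ m
        * (X - C ((r : ℂ) - (s : ℂ) * Complex.I)) ^ (m-1-j) := by
  have h1 := ppC16 r s m
  have h2 := ppC16 r (-s) (m-1-j)
  push_cast at h2
  rw [show (r:ℂ) + -(s:ℂ) * Complex.I = (r:ℂ) - (s:ℂ) * Complex.I by ring] at h2
  simp only [AA16, BB16, Polynomial.map_add, Polynomial.map_sub, Polynomial.map_mul]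
  rw [← h1, ← h2]
  linear_combination (-(ρ (pp16 r s m).2 * ρ (pp16 r (-s) (m-1-j)).2)) * hI16

lemma recAB16 (r s : ℝ) (m j : ℕ) (hj : j + 1 ≤ m - 1) :
    AA16 r s m j = (X - C r) * AA16 r s m (j+1) - C s * BB16 r s m (j+1) ∧
    BB16 r s m j = (X - C r) * BB16 r s m (j+1) + C s * AA16 r s m (j+1) := by
  have h : m - 1 - j = (m - 1 - (j+1)) + 1 := by omega
  constructor <;> (simp only [AA16, BB16]; rw [h]; simp only [pp16, C_neg]; ring)

lemma reim16 (R S T : ℝ[X]) (h : ρ R + C Complex.I * ρ S = ρ T) : R = T ∧ S = 0 := by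
  have hc : ∀ k, (R.coeff k : ℂ) + Complex.I * (S.coeff k : ℂ) = (T.coeff k : ℂ) := by
    intro k
    have := congrArg (fun p => Polynomial.coeff p k) h
    simpa [coeff_map] using this
  constructor <;> ext k
  · have h1 := congrArg Complex.re (hc k); simpa using h1
  · have h2 := congrArg Complex.im (hc k); simpa using h2

lemma bound16 (r s : ℝ) (m : ℕ) (hm : 0 < m) :
    (X - C r) * AA16 r s m 0 - C s * BB16 r s m 0 = ((X - C r)^2 + C (s^2))^m ∧
    (X - C r) * BB16 r s m 0 + C s * AA16 r s m 0 = 0 := by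
  apply reim16
  have hG := hG16 r s m 0
  have e1 : ρ ((X - C r) * AA16 r s m 0 - C s * BB16 r s m 0)
      + C Complex.I * ρ ((X - C r) * BB16 r s m 0 + C s * AA16 r s m 0)
      = (X - C ((r:ℂ) - (s:ℂ)*Complex.I)) *
        ((X - C ((r:ℂ) + (s:ℂ)*Complex.I)) ^ m * (X - C ((r:ℂ) - (s:ℂ)*Complex.I)) ^ (m-1-0)) := by
    rw [← hG]
    simp only [Polynomial.map_add, Polynomial.map_sub, Polynomial.map_mul, Polynomial.map_X,
      Polynomial.map_C, map_sub, map_mul, map_add, Complex.coe_algebraMap]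
    linear_combination (- (C (s:ℂ)) * ρ (BB16 r s m 0)) * hI16
  rw [e1]
  have e2 : ((X : ℂ[X]) - C ((r:ℂ) + (s:ℂ)*Complex.I)) * (X - C ((r:ℂ) - (s:ℂ)*Complex.I))
      = ρ ((X - C r)^2 + C (s^2)) := by
    simp only [Polynomial.map_add, Polynomial.map_pow, Polynomial.map_sub, Polynomial.map_mul,
      Polynomial.map_X, Polynomial.map_C, map_sub, map_mul, map_add, map_pow, Complex.coe_algebraMap]
    linear_combination (- (C (s:ℂ))^2) * hI16
  calc (X - C ((r:ℂ) - (s:ℂ)*Complex.I)) *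
        ((X - C ((r:ℂ) + (s:ℂ)*Complex.I)) ^ m * (X - C ((r:ℂ) - (s:ℂ)*Complex.I)) ^ (m-1-0))
      = (X - C ((r:ℂ) + (s:ℂ)*Complex.I)) ^ m *
        ((X - C ((r:ℂ) - (s:ℂ)*Complex.I)) ^ (m-1) * (X - C ((r:ℂ) - (s:ℂ)*Complex.I))) := by
        simp only [Nat.sub_zero]; ring
    _ = (X - C ((r:ℂ) + (s:ℂ)*Complex.I)) ^ m * (X - C ((r:ℂ) - (s:ℂ)*Complex.I)) ^ m := by
        rw [← pow_succ, show m-1+1 = m by omega]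
    _ = (((X : ℂ[X]) - C ((r:ℂ) + (s:ℂ)*Complex.I)) * (X - C ((r:ℂ) - (s:ℂ)*Complex.I))) ^ m := by
        rw [mul_pow]
    _ = ρ (((X - C r)^2 + C (s^2))^m) := by rw [e2, Polynomial.map_pow]

lemma deg_pp16 (r s : ℝ) (k : ℕ) :
    (pp16 r s k).1.natDegree ≤ k ∧ (pp16 r s k).2.natDegree ≤ k := by
  induction k with
  | zero => simp [pp16]
  | succ k ih =>
    obtain ⟨h1, h2⟩ := ih
    have hx : ∀ p : ℝ[X], p.natDegree ≤ k → ((X - C r) * p).natDegree ≤ k + 1 := fun p hp =>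
      le_trans natDegree_mul_le (by simp [natDegree_X_sub_C]; omega)
    have hc : ∀ p : ℝ[X], p.natDegree ≤ k → (C s * p).natDegree ≤ k + 1 := fun p hp =>
      le_trans natDegree_mul_le (by simp [natDegree_C]; omega)
    exact ⟨le_trans (natDegree_add_le _ _) (max_le (hx _ h1) (hc _ h2)),
           le_trans (natDegree_sub_le _ _) (max_le (hx _ h2) (hc _ h1))⟩

lemma deg_AB16 (r s : ℝ) (m j : ℕ) :
    (AA16 r s m j).natDegree ≤ m + (m-1-j) ∧ (BB16 r s m j).natDegree ≤ m + (m-1-j) := by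
  obtain ⟨a1, a2⟩ := deg_pp16 r s m
  obtain ⟨b1, b2⟩ := deg_pp16 r (-s) (m-1-j)
  constructor
  · exact le_trans (natDegree_sub_le _ _) (max_le (le_trans natDegree_mul_le (by omega))
      (le_trans natDegree_mul_le (by omega)))
  · exact le_trans (natDegree_add_le _ _) (max_le (le_trans natDegree_mul_le (by omega))
      (le_trans natDegree_mul_le (by omega)))

lemma monic_p16 (r s : ℝ) : (((X - C r)^2 + C (s^2)) : ℝ[X]).Monic := by
  apply ((monic_X_sub_C r).pow 2).add_of_left
  refine lt_of_le_of_lt degree_C_le ?_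
  rw [degree_pow, degree_X_sub_C]
  norm_num

lemma natdeg_p16 (r s : ℝ) : (((X - C r)^2 + C (s^2)) : ℝ[X]).natDegree = 2 := by
  compute_degree!

lemma prime_p16 (r s : ℝ) (hs : s ≠ 0) : Prime (((X - C r)^2 + C (s^2)) : ℝ[X]) := by
  rw [← (UniqueFactorizationMonoid.irreducible_iff_prime)]
  rw [irreducible_iff_roots_eq_zero_of_degree_le_three (by rw [natdeg_p16])
    (by rw [natdeg_p16]; omega)]
  rw [Multiset.eq_zero_iff_forall_notMem]
  intro a ha
  rw [mem_roots'] at ha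
  have h2 := ha.2
  simp only [IsRoot, eval_add, eval_pow, eval_sub, eval_X, eval_C] at h2
  have : s^2 > 0 := by positivity
  nlinarith

lemma ann16 {V : Type*} [AddCommGroup V] [Module ℝ V] (φ : Module.End ℝ V) (p : ℝ[X])
    (hp : Prime p) (m : ℕ) (hmin : Polynomial.aeval φ (p^m) = 0) (v : V)
    (hv : (Polynomial.aeval φ (p^(m-1))) v ≠ 0) (q : ℝ[X]) (hq : (Polynomial.aeval φ q) v = 0) :
    p^m ∣ q := by
  set g := EuclideanDomain.gcd (p^m) q with hg
  have hgv : (Polynomial.aeval φ g) v = 0 := by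
    have hrep := EuclideanDomain.gcd_eq_gcd_ab (p^m) q
    rw [hg, hrep, mul_comm (p^m), mul_comm q, map_add, map_mul, map_mul]
    simp [LinearMap.add_apply, Module.End.mul_apply, hmin, hq]
  obtain ⟨i, hi, hassoc⟩ := (dvd_prime_pow hp m).mp (EuclideanDomain.gcd_dvd_left (p^m) q)
  by_cases him : i = m
  · subst him
    exact dvd_trans hassoc.symm.dvd (EuclideanDomain.gcd_dvd_right _ _)
  · exfalso
    have hgd : g ∣ p^(m-1) := dvd_trans hassoc.dvd (pow_dvd_pow p (by omega))
    obtain ⟨c, hc⟩ := hgd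
    apply hv
    rw [hc, mul_comm, map_mul]
    simp [Module.End.mul_apply, hgv]

lemma sum_pick16 {ι : Type*} [Fintype ι] {M : Type*} [AddCommMonoid M] (f : ι → M)
    (P : ι → Prop) [DecidablePred P] (j0 : ι) (h0 : P j0) (h1 : ∀ j, P j → j = j0) :
    (∑ j, if P j then f j else 0) = f j0 := by
  rw [Finset.sum_eq_single j0]
  · rw [if_pos h0]
  · intro b _ hb; rw [if_neg (fun hP => hb (h1 b hP))]
  · intro h; exact absurd (Finset.mem_univ j0) h

lemma sum_pick0_16 {ι : Type*} [Fintype ι] {M : Type*} [AddCommMonoid M] (f : ι → M)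
    (P : ι → Prop) [DecidablePred P] (h1 : ∀ j, ¬ P j) :
    (∑ j, if P j then f j else 0) = 0 := by
  apply Finset.sum_eq_zero; intro b _; rw [if_neg (h1 b)]

lemma indep16 (r s : ℝ) (hs : s ≠ 0) (m : ℕ) (hm : 0 < m) (c d : Fin m → ℝ)
    (h : ∑ j : Fin m, (c j • AA16 r s m j.1 + d j • BB16 r s m j.1) = 0) :
    ∀ j, c j = 0 ∧ d j = 0 := by
  set z : ℂ := (r:ℂ) + (s:ℂ) * Complex.I with hz
  set z' : ℂ := (r:ℂ) - (s:ℂ) * Complex.I with hz'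
  set Z : ℂ[X] := X - C z with hZ
  set Z' : ℂ[X] := X - C z' with hZ'
  set w : Fin m → ℂ := fun j => (c j : ℂ) - Complex.I * (d j : ℂ) with hw
  set w' : Fin m → ℂ := fun j => (c j : ℂ) + Complex.I * (d j : ℂ) with hw'
  have h2 : ∑ j : Fin m, (C ((c j):ℂ) * ρ (AA16 r s m j.1) + C ((d j):ℂ) * ρ (BB16 r s m j.1))
      = 0 := by
    have := congrArg (Polynomial.mapRingHom (algebraMap ℝ ℂ)) h
    rw [map_sum] at this
    simpa [Polynomial.coe_mapRingHom, Polynomial.smul_eq_C_mul, Polynomial.map_add,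
      Polynomial.map_mul, Polynomial.map_C, Complex.coe_algebraMap] using this
  have hmapconj : ∀ q : ℝ[X], (ρ q).map (starRingEnd ℂ) = ρ q := by
    intro q
    rw [Polynomial.map_map]
    congr 1
    ext x
    simp [Complex.conj_ofReal]
  have hG : ∀ j : ℕ, ρ (AA16 r s m j) + C Complex.I * ρ (BB16 r s m j)
      = Z^m * Z'^(m-1-j) := fun j => hG16 r s m j
  have hG' : ∀ j : ℕ, ρ (AA16 r s m j) - C Complex.I * ρ (BB16 r s m j)
      = Z'^m * Z^(m-1-j) := by
    intro j
    have hconj1 : (starRingEnd ℂ) ((r:ℂ) + (s:ℂ)*Complex.I) = z' := by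
      rw [map_add, map_mul, Complex.conj_ofReal, Complex.conj_ofReal, Complex.conj_I, hz']
      ring
    have hconj2 : (starRingEnd ℂ) ((r:ℂ) - (s:ℂ)*Complex.I) = z := by
      rw [map_sub, map_mul, Complex.conj_ofReal, Complex.conj_ofReal, Complex.conj_I, hz]
      ring
    have := congrArg (Polynomial.map (starRingEnd ℂ)) (hG16 r s m j)
    simp only [Polynomial.map_add, Polynomial.map_mul, Polynomial.map_pow, Polynomial.map_sub,
      Polynomial.map_X, Polynomial.map_C, hmapconj, Complex.conj_I, hconj1, hconj2] at this
    rw [← hZ, ← hZ'] at this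
    rw [← this, map_neg]
    ring
  set U : ℂ[X] := ∑ j : Fin m, C (w j) * Z'^(m-1-j.1) with hU
  set W : ℂ[X] := ∑ j : Fin m, C (w' j) * Z^(m-1-j.1) with hW
  have key2 : ∀ j : Fin m,
      C (w j) * (Z^m * Z'^(m-1-j.1)) + C (w' j) * (Z'^m * Z^(m-1-j.1))
      = 2 * (C ((c j):ℂ) * ρ (AA16 r s m j.1) + C ((d j):ℂ) * ρ (BB16 r s m j.1)) := by
    intro j
    rw [← hG j.1, ← hG' j.1, hw, hw']
    simp only [map_sub, map_add, map_mul]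
    linear_combination (-2 * C ((d j):ℂ) * ρ (BB16 r s m j.1)) * hI16
  have h4 : Z^m * U + Z'^m * W = 0 := by
    have e : Z^m * U + Z'^m * W = ∑ j : Fin m,
        (C (w j) * (Z^m * Z'^(m-1-j.1)) + C (w' j) * (Z'^m * Z^(m-1-j.1))) := by
      rw [hU, hW, Finset.mul_sum, Finset.mul_sum, ← Finset.sum_add_distrib]
      exact Finset.sum_congr rfl (fun j _ => by ring)
    rw [e, Finset.sum_congr rfl (fun j _ => key2 j), ← Finset.mul_sum, h2, mul_zero]
  have hdvd : Z'^m ∣ U := by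
    have hzz : z' - z ≠ 0 := by
      rw [hz, hz']
      intro hc0
      apply hs
      have h0 : (s:ℂ) * Complex.I = 0 := by linear_combination -hc0/2
      rcases mul_eq_zero.mp h0 with h' | h'
      · exact_mod_cast h'
      · exact absurd h' Complex.I_ne_zero
    have hcop : IsCoprime Z' Z := isCoprime_X_sub_C_of_isUnit_sub hzz.isUnit
    exact (hcop.pow).dvd_of_dvd_mul_left ⟨-W, by linear_combination h4⟩
  have hUz : U = 0 := by
    by_contra hU0
    have h5 := Polynomial.natDegree_le_of_dvd hdvd hU0
    have h6 : U.natDegree ≤ m - 1 := by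
      rw [hU]
      apply Polynomial.natDegree_sum_le_of_forall_le
      intro j _
      refine le_trans natDegree_mul_le ?_
      have j2 := j.2
      rw [natDegree_C, hZ', natDegree_pow, natDegree_X_sub_C, mul_one]
      omega
    rw [natDegree_pow, hZ', natDegree_X_sub_C, mul_one] at h5
    omega
  have hwj : ∀ j0 : Fin m, w j0 = 0 := by
    intro j0
    have hcomp : U.comp (X + C z') = ∑ j : Fin m, C (w j) * X^(m-1-j.1) := by
      rw [hU, Polynomial.sum_comp]
      refine Finset.sum_congr rfl (fun j _ => ?_)
      rw [hZ', Polynomial.mul_comp, Polynomial.C_comp, Polynomial.pow_comp,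
        Polynomial.sub_comp, Polynomial.X_comp, Polynomial.C_comp]
      simp
    have h8 : (U.comp (X + C z')).coeff (m-1-j0.1) = 0 := by rw [hUz]; simp
    rw [hcomp, Polynomial.finset_sum_coeff] at h8
    simp only [Polynomial.coeff_C_mul, Polynomial.coeff_X_pow] at h8
    have hpick := sum_pick16 (fun j : Fin m => w j)
      (fun j => (m-1-j0.1 : ℕ) = (m-1-j.1 : ℕ)) j0 rfl
      (fun j hj => by have := j.2; have := j0.2; exact Fin.ext (by omega))
    simp only [mul_ite, mul_one, mul_zero] at h8
    rw [hpick] at h8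
    exact h8
  intro j
  have hj := hwj j
  simp only [hw] at hj
  constructor
  · have := congrArg Complex.re hj; simpa using this
  · have := congrArg Complex.im hj; simpa using this

theorem stmt16 {V : Type*} [AddCommGroup V] [Module ℝ V] [FiniteDimensional ℝ V]
    {n m : ℕ} (hm : 0 < m) (hn : n = 2 * m) (hV : Module.finrank ℝ V = n)
    (φ : Module.End ℝ V) (r s : ℝ) (hs : s ≠ 0)
    (hnd : LinearMap.charpoly φ = minpoly ℝ φ)
    (hchar : LinearMap.charpoly φ = ((X - C r) ^ 2 + C (s ^ 2)) ^ m)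
    (Ms Mn : Matrix (Fin n) (Fin n) ℝ)
    (hMs : Ms = -∑ j : Fin m,
      (Matrix.single (⟨2 * j.1, by have := j.2; omega⟩ : Fin n)
          (⟨2 * j.1 + 1, by have := j.2; omega⟩ : Fin n) (1 : ℝ) -
        Matrix.single (⟨2 * j.1 + 1, by have := j.2; omega⟩ : Fin n)
          (⟨2 * j.1, by have := j.2; omega⟩ : Fin n) (1 : ℝ)))
    (hMn : Mn = ∑ j : Fin (n - 2),
      Matrix.single (⟨j.1, by have := j.2; omega⟩ : Fin n)
        (⟨j.1 + 2, by have := j.2; omega⟩ : Fin n) (1 : ℝ)) :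
    ∃ b : Module.Basis (Fin n) ℝ V,
      LinearMap.toMatrix b b φ = r • (1 : Matrix (Fin n) (Fin n) ℝ) + s • Ms + Mn := by
  subst hn
  set p : ℝ[X] := (X - C r) ^ 2 + C (s ^ 2) with hp
  have hmin : minpoly ℝ φ = p ^ m := by rw [← hnd, hchar]
  have haev : Polynomial.aeval φ (p ^ m) = 0 := by rw [← hmin]; exact minpoly.aeval ℝ φ
  have hvex : Polynomial.aeval φ (p ^ (m-1)) ≠ 0 := by
    intro h0
    have hdvd := minpoly.dvd ℝ φ h0
    rw [hmin] at hdvd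
    have hne : (p ^ (m-1) : ℝ[X]) ≠ 0 := ((monic_p16 r s).pow _).ne_zero
    have hle := Polynomial.natDegree_le_of_dvd hdvd hne
    rw [natDegree_pow, natDegree_pow, hp, natdeg_p16] at hle
    omega
  obtain ⟨v, hv⟩ : ∃ v, (Polynomial.aeval φ (p ^ (m-1))) v ≠ 0 := by
    by_contra hC
    push_neg at hC
    exact hvex (LinearMap.ext fun u => hC u)
  set w : Fin (2*m) → V := fun i =>
    (Polynomial.aeval φ (if i.1 % 2 = 0 then AA16 r s m (i.1/2) else BB16 r s m (i.1/2))) v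
    with hwdef
  have hwe : ∀ (J : ℕ) (hJ : 2*J < 2*m),
      w ⟨2*J, hJ⟩ = (Polynomial.aeval φ (AA16 r s m J)) v := by
    intro J hJ
    simp only [hwdef]
    rw [if_pos (by omega : 2*J % 2 = 0), show 2*J/2 = J by omega]
  have hwo : ∀ (J : ℕ) (hJ : 2*J+1 < 2*m),
      w ⟨2*J+1, hJ⟩ = (Polynomial.aeval φ (BB16 r s m J)) v := by
    intro J hJ
    simp only [hwdef]
    rw [if_neg (by omega : ¬ (2*J+1) % 2 = 0), show (2*J+1)/2 = J by omega]
  let e2 : Fin m × Fin 2 ≃ Fin (2*m) :=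
    { toFun := fun x => ⟨2*x.1.1 + x.2.1, by have := x.1.2; have := x.2.2; omega⟩
      invFun := fun i => (⟨i.1/2, by have := i.2; omega⟩, ⟨i.1 % 2, by omega⟩)
      left_inv := by
        rintro ⟨⟨a,ha⟩,⟨b,hb⟩⟩
        exact Prod.ext (Fin.ext (by simp; omega)) (Fin.ext (by simp; omega))
      right_inv := by
        rintro ⟨i, hi⟩
        exact Fin.ext (by simp; omega) }
  have he2val : ∀ x : Fin m × Fin 2, (e2 x).1 = 2*x.1.1 + x.2.1 := fun x => rfl
  have hli : LinearIndependent ℝ w := by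
    rw [Fintype.linearIndependent_iff]
    intro g hg
    set q : ℝ[X] := ∑ i : Fin (2*m),
      g i • (if i.1 % 2 = 0 then AA16 r s m (i.1/2) else BB16 r s m (i.1/2)) with hqdef
    have hq : (Polynomial.aeval φ q) v = 0 := by
      rw [hqdef, map_sum, LinearMap.sum_apply, ← hg]
      refine Finset.sum_congr rfl (fun i _ => ?_)
      rw [map_smul, LinearMap.smul_apply]
    have hdeg : q.natDegree < 2*m := by
      have hle : q.natDegree ≤ 2*m - 1 := by
        rw [hqdef]
        apply Polynomial.natDegree_sum_le_of_forall_le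
        intro i _
        refine le_trans (Polynomial.natDegree_smul_le _ _) ?_
        by_cases hpar : i.1 % 2 = 0
        · rw [if_pos hpar]
          exact le_trans (deg_AB16 r s m (i.1/2)).1 (by omega)
        · rw [if_neg hpar]
          exact le_trans (deg_AB16 r s m (i.1/2)).2 (by omega)
      omega
    have hpm := ann16 φ p (prime_p16 r s hs) m haev v hv q hq
    have hq0 : q = 0 := by
      by_contra h0
      have hle := Polynomial.natDegree_le_of_dvd hpm h0
      rw [natDegree_pow, hp, natdeg_p16] at hle
      omega
    have hterm : ∀ x : Fin m × Fin 2,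
        g (e2 x) • (if (e2 x).1 % 2 = 0 then AA16 r s m ((e2 x).1/2)
          else BB16 r s m ((e2 x).1/2))
        = g (e2 x) • (if x.2.1 = 0 then AA16 r s m x.1.1 else BB16 r s m x.1.1) := by
      intro x
      have h2 := x.2.2
      congr 1
      rw [he2val x]
      by_cases h0 : x.2.1 = 0
      · rw [h0, if_pos (by omega), if_pos rfl, show (2*x.1.1+0)/2 = x.1.1 by omega]
      · rw [if_neg (by omega), if_neg h0, show (2*x.1.1+x.2.1)/2 = x.1.1 by omega]
    have hsplit : ∑ j : Fin m,
        ((g (e2 (j, 0))) • AA16 r s m j.1 + (g (e2 (j, 1))) • BB16 r s m j.1) = 0 := by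
      rw [← hq0, hqdef]
      rw [← Fintype.sum_equiv e2
        (fun x => g (e2 x) • (if (e2 x).1 % 2 = 0 then AA16 r s m ((e2 x).1/2)
          else BB16 r s m ((e2 x).1/2))) _ (fun x => rfl)]
      simp only [hterm]
      rw [Fintype.sum_prod_type]
      refine Finset.sum_congr rfl (fun j _ => ?_)
      rw [Fin.sum_univ_two]
      simp
    have hcd := indep16 r s hs m hm (fun j => g (e2 (j, 0))) (fun j => g (e2 (j, 1))) hsplit
    intro i
    have hi2 := i.2
    by_cases hpar : i.1 % 2 = 0
    · have hc := (hcd ⟨i.1/2, by omega⟩).1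
      rwa [show e2 (⟨i.1/2, by omega⟩, 0) = i from Fin.ext (by rw [he2val]; simp; omega)] at hc
    · have hc := (hcd ⟨i.1/2, by omega⟩).2
      rwa [show e2 (⟨i.1/2, by omega⟩, 1) = i from Fin.ext (by rw [he2val]; simp; omega)] at hc
  haveI : Nonempty (Fin (2*m)) := ⟨⟨0, by omega⟩⟩
  have hcard : Fintype.card (Fin (2*m)) = Module.finrank ℝ V := by simp [hV]
  let b := basisOfLinearIndependentOfCardEqFinrank hli hcard
  have hb : ⇑b = w := coe_basisOfLinearIndependentOfCardEqFinrank hli hcard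
  -- action of φ on the w basis
  have hphi : ∀ P : ℝ[X], φ ((Polynomial.aeval φ P) v) = (Polynomial.aeval φ (X * P)) v := by
    intro P
    rw [map_mul, aeval_X, Module.End.mul_apply]
  have hwcong : ∀ (a b' : ℕ) (ha : a < 2*m) (hb' : b' < 2*m), a = b' →
      w ⟨a, ha⟩ = w ⟨b', hb'⟩ := by
    rintro a b' ha hb' rfl; rfl
  have hφe : ∀ (J : ℕ) (hJ : J < m), φ (w ⟨2*J, by omega⟩) =
      r • w ⟨2*J, by omega⟩ + s • w ⟨2*J+1, by omega⟩ +
      (if h1 : 1 ≤ J then w ⟨2*J-2, by omega⟩ else 0) := by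
    intro J hJ
    rw [hwe J (by omega), hphi]
    by_cases h1 : 1 ≤ J
    · rw [dif_pos h1]
      have hrec := recAB16 r s m (J-1) (by omega)
      rw [show J-1+1 = J by omega] at hrec
      have hXA : X * AA16 r s m J
          = r • AA16 r s m J + s • BB16 r s m J + AA16 r s m (J-1) := by
        rw [Polynomial.smul_eq_C_mul, Polynomial.smul_eq_C_mul]
        linear_combination -hrec.1
      rw [hXA, map_add, map_add, map_smul, map_smul, LinearMap.add_apply, LinearMap.add_apply,
        LinearMap.smul_apply, LinearMap.smul_apply]
      rw [← hwe J (by omega), ← hwo J (by omega)]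
      rw [hwcong (2*J-2) (2*(J-1)) (by omega) (by omega) (by omega), hwe (J-1) (by omega)]
    · rw [dif_neg h1]
      have h0 : J = 0 := by omega
      subst h0
      have hbd := bound16 r s m hm
      have hXA : X * AA16 r s m 0
          = r • AA16 r s m 0 + s • BB16 r s m 0 + p^m := by
        rw [Polynomial.smul_eq_C_mul, Polynomial.smul_eq_C_mul, hp]
        linear_combination hbd.1
      rw [hXA, map_add, map_add, map_smul, map_smul, haev, LinearMap.add_apply,
        LinearMap.add_apply, LinearMap.smul_apply, LinearMap.smul_apply]
      rw [← hwe 0 (by omega), ← hwo 0 (by omega)]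
      simp
  have hφo : ∀ (J : ℕ) (hJ : J < m), φ (w ⟨2*J+1, by omega⟩) =
      r • w ⟨2*J+1, by omega⟩ + (-s) • w ⟨2*J, by omega⟩ +
      (if h1 : 1 ≤ J then w ⟨2*J-1, by omega⟩ else 0) := by
    intro J hJ
    rw [hwo J (by omega), hphi]
    by_cases h1 : 1 ≤ J
    · rw [dif_pos h1]
      have hrec := recAB16 r s m (J-1) (by omega)
      rw [show J-1+1 = J by omega] at hrec
      have hXB : X * BB16 r s m J
          = r • BB16 r s m J + (-s) • AA16 r s m J + BB16 r s m (J-1) := by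
        rw [Polynomial.smul_eq_C_mul, Polynomial.smul_eq_C_mul, C_neg]
        linear_combination -hrec.2
      rw [hXB, map_add, map_add, map_smul, map_smul, LinearMap.add_apply, LinearMap.add_apply,
        LinearMap.smul_apply, LinearMap.smul_apply]
      rw [← hwe J (by omega), ← hwo J (by omega)]
      rw [hwcong (2*J-1) (2*(J-1)+1) (by omega) (by omega) (by omega), hwo (J-1) (by omega)]
    · rw [dif_neg h1]
      have h0 : J = 0 := by omega
      subst h0
      have hbd := bound16 r s m hm
      have hXB : X * BB16 r s m 0
          = r • BB16 r s m 0 + (-s) • AA16 r s m 0 := by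
        rw [Polynomial.smul_eq_C_mul, Polynomial.smul_eq_C_mul, C_neg]
        linear_combination hbd.2
      rw [hXB, map_add, map_smul, map_smul, LinearMap.add_apply,
        LinearMap.smul_apply, LinearMap.smul_apply]
      rw [← hwe 0 (by omega), ← hwo 0 (by omega)]
      simp
  -- column sums
  have hstd : ∀ (a bc i k : Fin (2*m)),
      (Matrix.single a bc (1:ℝ)) i k = if i = a ∧ k = bc then 1 else 0 := by
    intro a bc i k
    unfold Matrix.single
    rw [Matrix.of_apply]
    simp [eq_comm]
  have hcol : ∀ (a bc k : Fin (2*m)),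
      (∑ i, (Matrix.single a bc (1:ℝ)) i k • w i) = if k = bc then w a else 0 := by
    intro a bc k
    by_cases hkb : k = bc
    · rw [if_pos hkb]
      have hterm : ∀ i, (Matrix.single a bc (1:ℝ)) i k • w i
          = if i = a then w i else 0 := by
        intro i
        rw [hstd]
        by_cases hia : i = a
        · simp [hia, hkb]
        · simp [hia]
      rw [Finset.sum_congr rfl (fun i _ => hterm i)]
      exact sum_pick16 w (fun i => i = a) a rfl (fun j hj => hj)
    · rw [if_neg hkb]
      apply Finset.sum_eq_zero
      intro i _
      rw [hstd, if_neg (fun h => hkb h.2), zero_smul]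
  have hMsexp : ∀ (kk : Fin (2*m)), (∑ i, Ms i kk • w i) = ∑ j : Fin m,
      ((if kk = (⟨2*j.1, by have := j.2; omega⟩ : Fin (2*m))
          then w ⟨2*j.1+1, by have := j.2; omega⟩ else 0) -
       (if kk = (⟨2*j.1+1, by have := j.2; omega⟩ : Fin (2*m))
          then w ⟨2*j.1, by have := j.2; omega⟩ else 0)) := by
    intro kk
    rw [hMs]
    have expand : ∀ i, (-∑ j : Fin m,
        (Matrix.single (⟨2*j.1, by have := j.2; omega⟩ : Fin (2*m))
            (⟨2*j.1+1, by have := j.2; omega⟩ : Fin (2*m)) (1:ℝ) -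
         Matrix.single (⟨2*j.1+1, by have := j.2; omega⟩ : Fin (2*m))
            (⟨2*j.1, by have := j.2; omega⟩ : Fin (2*m)) (1:ℝ))) i kk • w i
        = ∑ j : Fin m,
        ((Matrix.single (⟨2*j.1+1, by have := j.2; omega⟩ : Fin (2*m))
            (⟨2*j.1, by have := j.2; omega⟩ : Fin (2*m)) (1:ℝ)) i kk • w i -
         (Matrix.single (⟨2*j.1, by have := j.2; omega⟩ : Fin (2*m))
            (⟨2*j.1+1, by have := j.2; omega⟩ : Fin (2*m)) (1:ℝ)) i kk • w i) := by
      intro i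
      rw [Matrix.neg_apply, Matrix.sum_apply, ← Finset.sum_neg_distrib, Finset.sum_smul]
      refine Finset.sum_congr rfl (fun j _ => ?_)
      rw [Matrix.sub_apply, neg_sub, sub_smul]
    rw [Finset.sum_congr rfl (fun i _ => expand i), Finset.sum_comm]
    refine Finset.sum_congr rfl (fun j _ => ?_)
    rw [Finset.sum_sub_distrib, hcol, hcol]
  have hMscolE : ∀ (J : ℕ) (hJ : J < m),
      (∑ i, Ms i (⟨2*J, by omega⟩ : Fin (2*m)) • w i) = w ⟨2*J+1, by omega⟩ := by
    intro J hJ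
    rw [hMsexp, Finset.sum_sub_distrib]
    rw [sum_pick16 (fun j : Fin m => w ⟨2*j.1+1, by have := j.2; omega⟩)
      (fun j => (⟨2*J, by omega⟩ : Fin (2*m)) = ⟨2*j.1, by have := j.2; omega⟩) ⟨J, hJ⟩
      (by rfl) (fun j hj => by
        simp only [Fin.mk.injEq] at hj
        exact Fin.ext (show j.1 = J by omega))]
    rw [sum_pick0_16 (fun j : Fin m => w ⟨2*j.1, by have := j.2; omega⟩)
      (fun j => (⟨2*J, by omega⟩ : Fin (2*m)) = ⟨2*j.1+1, by have := j.2; omega⟩)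
      (fun j hj => by simp only [Fin.mk.injEq] at hj; omega)]
    rw [sub_zero]
  have hMscolO : ∀ (J : ℕ) (hJ : J < m),
      (∑ i, Ms i (⟨2*J+1, by omega⟩ : Fin (2*m)) • w i) = (-1 : ℝ) • w ⟨2*J, by omega⟩ := by
    intro J hJ
    rw [hMsexp, Finset.sum_sub_distrib]
    rw [sum_pick0_16 (fun j : Fin m => w ⟨2*j.1+1, by have := j.2; omega⟩)
      (fun j => (⟨2*J+1, by omega⟩ : Fin (2*m)) = ⟨2*j.1, by have := j.2; omega⟩)
      (fun j hj => by simp only [Fin.mk.injEq] at hj; omega)]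
    rw [sum_pick16 (fun j : Fin m => w ⟨2*j.1, by have := j.2; omega⟩)
      (fun j => (⟨2*J+1, by omega⟩ : Fin (2*m)) = ⟨2*j.1+1, by have := j.2; omega⟩) ⟨J, hJ⟩
      (by rfl) (fun j hj => by
        simp only [Fin.mk.injEq] at hj
        exact Fin.ext (show j.1 = J by omega))]
    rw [zero_sub, neg_one_smul]
  have hMnexp : ∀ (kk : Fin (2*m)), (∑ i, Mn i kk • w i) = ∑ j : Fin (2*m-2),
      (if kk = (⟨j.1+2, by have := j.2; omega⟩ : Fin (2*m))
        then w ⟨j.1, by have := j.2; omega⟩ else 0) := by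
    intro kk
    rw [hMn]
    have expand : ∀ i, (∑ j : Fin (2*m-2),
        Matrix.single (⟨j.1, by have := j.2; omega⟩ : Fin (2*m))
          (⟨j.1+2, by have := j.2; omega⟩ : Fin (2*m)) (1:ℝ)) i kk • w i
        = ∑ j : Fin (2*m-2),
        (Matrix.single (⟨j.1, by have := j.2; omega⟩ : Fin (2*m))
          (⟨j.1+2, by have := j.2; omega⟩ : Fin (2*m)) (1:ℝ)) i kk • w i := by
      intro i
      rw [Matrix.sum_apply, Finset.sum_smul]
    rw [Finset.sum_congr rfl (fun i _ => expand i), Finset.sum_comm]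
    exact Finset.sum_congr rfl (fun j _ => hcol _ _ _)
  have hMncolE : ∀ (J : ℕ) (hJ : J < m),
      (∑ i, Mn i (⟨2*J, by omega⟩ : Fin (2*m)) • w i)
        = (if h1 : 1 ≤ J then w ⟨2*J-2, by omega⟩ else 0) := by
    intro J hJ
    rw [hMnexp]
    by_cases h1 : 1 ≤ J
    · rw [dif_pos h1]
      rw [sum_pick16 (fun j : Fin (2*m-2) => w ⟨j.1, by have := j.2; omega⟩)
        (fun j => (⟨2*J, by omega⟩ : Fin (2*m)) = ⟨j.1+2, by have := j.2; omega⟩)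
        ⟨2*J-2, by omega⟩ (Fin.ext (show 2*J = 2*J-2+2 by omega)) (fun j hj => by
          simp only [Fin.mk.injEq] at hj
          exact Fin.ext (show j.1 = 2*J-2 by omega))]
    · rw [dif_neg h1]
      exact sum_pick0_16 _ _ (fun j hj => by simp only [Fin.mk.injEq] at hj; omega)
  have hMncolO : ∀ (J : ℕ) (hJ : J < m),
      (∑ i, Mn i (⟨2*J+1, by omega⟩ : Fin (2*m)) • w i)
        = (if h1 : 1 ≤ J then w ⟨2*J-1, by omega⟩ else 0) := by
    intro J hJ
    rw [hMnexp]
    by_cases h1 : 1 ≤ J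
    · rw [dif_pos h1]
      rw [sum_pick16 (fun j : Fin (2*m-2) => w ⟨j.1, by have := j.2; omega⟩)
        (fun j => (⟨2*J+1, by omega⟩ : Fin (2*m)) = ⟨j.1+2, by have := j.2; omega⟩)
        ⟨2*J-1, by omega⟩ (Fin.ext (show 2*J+1 = 2*J-1+2 by omega)) (fun j hj => by
          simp only [Fin.mk.injEq] at hj
          exact Fin.ext (show j.1 = 2*J-1 by omega))]
    · rw [dif_neg h1]
      exact sum_pick0_16 _ _ (fun j hj => by simp only [Fin.mk.injEq] at hj; omega)
  have hIdcol : ∀ kk : Fin (2*m),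
      (∑ i, (r • (1 : Matrix (Fin (2*m)) (Fin (2*m)) ℝ)) i kk • w i) = r • w kk := by
    intro kk
    have expand : ∀ i, (r • (1 : Matrix (Fin (2*m)) (Fin (2*m)) ℝ)) i kk • w i
        = if i = kk then r • w i else 0 := by
      intro i
      rw [Matrix.smul_apply, Matrix.one_apply]
      by_cases h : i = kk
      · simp [h]
      · simp [h]
    rw [Finset.sum_congr rfl (fun i _ => expand i)]
    exact sum_pick16 (fun i => r • w i) (fun i => i = kk) kk rfl (fun j hj => hj)
  refine ⟨b, ?_⟩
  have htl : Matrix.toLin b b (r • (1 : Matrix (Fin (2*m)) (Fin (2*m)) ℝ) + s • Ms + Mn)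
      = φ := by
    apply b.ext
    intro k
    rw [Matrix.toLin_self]
    simp only [hb]
    have hsplit3 : ∀ i, (r • (1 : Matrix (Fin (2*m)) (Fin (2*m)) ℝ) + s • Ms + Mn) i k • w i
        = (r • (1 : Matrix (Fin (2*m)) (Fin (2*m)) ℝ)) i k • w i
          + s • (Ms i k • w i) + Mn i k • w i := by
      intro i
      simp only [Matrix.add_apply, Matrix.smul_apply, smul_eq_mul, add_smul, mul_smul]
    rw [Finset.sum_congr rfl (fun i _ => hsplit3 i), Finset.sum_add_distrib,
      Finset.sum_add_distrib, ← Finset.smul_sum, hIdcol]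
    have hk2 := k.2
    by_cases hpar : k.1 % 2 = 0
    · obtain ⟨J, hJval⟩ : ∃ J, k.1 = 2*J := ⟨k.1/2, by omega⟩
      have hJ : J < m := by omega
      have hk : k = ⟨2*J, by omega⟩ := Fin.ext hJval
      rw [hk, hMscolE J hJ, hMncolE J hJ, hφe J hJ]
    · obtain ⟨J, hJval⟩ : ∃ J, k.1 = 2*J+1 := ⟨k.1/2, by omega⟩
      have hJ : J < m := by omega
      have hk : k = ⟨2*J+1, by omega⟩ := Fin.ext hJval
      rw [hk, hMscolO J hJ, hMncolO J hJ, hφo J hJ, smul_smul, mul_neg_one]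
  rw [← htl, LinearMap.toMatrix_toLin]
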